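/- If S_n is a sum of independent exponential random variables T_j ~ Exp(j), j=1,...,n, then the density of S_n at x ≥ 0 is n e^{-nx}(e^x - 1)^{n-1}. -/

import Mathlib

open MeasureTheory ProbabilityTheory Real
open scoped ENNReal


lemma map_add_withDensity (f g : ℝ → ℝ≥0∞) (hf : Measurable f) (hg : Measurable g) :
    Measure.map (fun p : ℝ × ℝ => p.1 + p.2) ((volume.withDensity f).prod (volume.withDensity g))
    = volume.withDensity (fun z => ∫⁻ x, f x * g (z - x)) := by
  ext s hs
  rw [Measure.map_apply (by fun_prop) hs,
    Measure.prod_apply (measurable_add hs : MeasurableSet ((fun p : ℝ × ℝ => p.1 + p.2) ⁻¹' s)),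
    withDensity_apply _ hs]
  have hmeas1 : Measurable fun x : ℝ => (volume.withDensity g)
      (Prod.mk x ⁻¹' ((fun p : ℝ × ℝ => p.1 + p.2) ⁻¹' s)) :=
    measurable_measure_prodMk_left (measurable_add hs)
  rw [lintegral_withDensity_eq_lintegral_mul _ hf hmeas1]
  have h1 : ∀ x : ℝ, (volume.withDensity g) (Prod.mk x ⁻¹' ((fun p : ℝ × ℝ => p.1 + p.2) ⁻¹' s))
      = ∫⁻ z, s.indicator 1 z * g (z - x) := by
    intro x
    have hA : MeasurableSet {y : ℝ | x + y ∈ s} := (measurable_const_add x) hs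
    have : Prod.mk x ⁻¹' ((fun p : ℝ × ℝ => p.1 + p.2) ⁻¹' s) = {y : ℝ | x + y ∈ s} := rfl
    rw [this, withDensity_apply _ hA, ← lintegral_indicator hA _]
    have h2 : ∀ y : ℝ, ({y : ℝ | x + y ∈ s}).indicator g y = s.indicator 1 (x + y) * g ((x + y) - x) := by
      intro y
      by_cases hy : x + y ∈ s
      · simp [Set.indicator_of_mem, hy, Set.indicator_of_mem (show y ∈ {y : ℝ | x + y ∈ s} from hy)]
      · simp [Set.indicator_of_notMem, hy, Set.indicator_of_notMem (show y ∉ {y : ℝ | x + y ∈ s} from hy)]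
    simp_rw [h2]
    exact lintegral_add_left_eq_self (fun z => s.indicator 1 z * g (z - x)) x
  have h1b : ∀ x : ℝ, f x * ∫⁻ z, s.indicator 1 z * g (z - x)
      = ∫⁻ z, f x * (s.indicator 1 z * g (z - x)) := by
    intro x
    have hm : Measurable fun z : ℝ => s.indicator (1 : ℝ → ℝ≥0∞) z * g (z - x) :=
      (measurable_one.indicator hs).mul (hg.comp (by fun_prop))
    rw [lintegral_const_mul _ hm]
  simp only [Pi.mul_apply]
  simp_rw [h1, h1b]
  have hunc : AEMeasurable (Function.uncurry fun a z => f a * (s.indicator 1 z * g (z - a)))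
      ((volume : Measure ℝ).prod volume) := by
    apply Measurable.aemeasurable
    apply Measurable.mul (hf.comp measurable_fst)
    exact ((measurable_one.indicator hs).comp measurable_snd).mul
      (hg.comp (measurable_snd.sub measurable_fst))
  rw [lintegral_lintegral_swap hunc]
  have h3 : ∀ z : ℝ, ∫⁻ x, f x * (s.indicator 1 z * g (z - x))
      = s.indicator (fun z => ∫⁻ x, f x * g (z - x)) z := by
    intro z
    by_cases hz : z ∈ s
    · simp_rw [Set.indicator_of_mem hz]; simp
    · simp_rw [Set.indicator_of_notMem hz]; simp
  simp_rw [h3]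
  rw [← lintegral_indicator hs _]

lemma iIndepFun_precomp {Ω : Type*} [MeasurableSpace Ω] {P : Measure Ω}
    {ι ι' : Type*} {β : Type*} {mβ : MeasurableSpace β} {f : ι → Ω → β}
    (h : iIndepFun (m := fun _ => mβ) f P) (g : ι' ↪ ι) :
    iIndepFun (m := fun _ => mβ) (fun i => f (g i)) P := by
  rw [iIndepFun_iff_measure_inter_preimage_eq_mul] at h ⊢
  intro S sets hsets
  classical
  set sets' : ι → Set β := fun i => ⋂ j ∈ S, ⋂ (_ : g j = i), sets j with hsets'
  have hkey : ∀ j₀ ∈ S, sets' (g j₀) = sets j₀ := by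
    intro j₀ hj₀
    ext x
    simp only [hsets', Set.mem_iInter]
    constructor
    · intro hx; exact hx j₀ hj₀ rfl
    · intro hx j hj hgj
      rwa [g.injective hgj]
  have hmeas' : ∀ i, i ∈ S.map g → MeasurableSet[mβ] (sets' i) := by
    intro i _
    exact MeasurableSet.biInter S.countable_toSet fun j hj =>
      MeasurableSet.iInter fun _ => hsets j hj
  have := h (S.map g) hmeas'
  rw [Finset.prod_map] at this
  have hInter : (⋂ i ∈ S.map g, f i ⁻¹' sets' i) = ⋂ j ∈ S, (fun i => f (g i)) j ⁻¹' sets j := by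
    ext x
    simp only [Set.mem_iInter, Finset.mem_map]
    constructor
    · intro hx j hj
      have := hx (g j) ⟨j, hj, rfl⟩
      rwa [hkey j hj] at this
    · rintro hx i ⟨j, hj, rfl⟩
      rw [hkey j hj]
      exact hx j hj
  rw [hInter] at this
  rw [this]
  apply Finset.prod_congr rfl
  intro j hj
  show P (f (g j) ⁻¹' sets' (g j)) = P (f (g j) ⁻¹' sets j)
  rw [hkey j hj]

lemma conv_density (n : ℕ) (hn : 1 ≤ n) (z : ℝ) :
    (∫⁻ x, ENNReal.ofReal (if 0 ≤ x then (n : ℝ) * exp (-(n : ℝ) * x) * (exp x - 1) ^ (n - 1) else 0)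
        * exponentialPDF ((n : ℝ) + 1) (z - x))
    = ENNReal.ofReal (if 0 ≤ z then ((n : ℝ) + 1) * exp (-((n : ℝ) + 1) * z) * (exp z - 1) ^ n else 0) := by
  have hpos : ∀ x : ℝ, 0 ≤ x → (0:ℝ) ≤ (n : ℝ) * exp (-(n : ℝ) * x) * (exp x - 1) ^ (n - 1) := by
    intro x hx
    have h1 : (1:ℝ) ≤ exp x := by simpa using exp_le_exp.mpr hx
    exact mul_nonneg (mul_nonneg (by positivity) (exp_pos _).le) (pow_nonneg (by linarith) _)
  have hfnonneg : ∀ x : ℝ, (0:ℝ) ≤ (if 0 ≤ x then (n : ℝ) * exp (-(n : ℝ) * x) * (exp x - 1) ^ (n - 1) else 0) := by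
    intro x; split_ifs with h
    · exact hpos x h
    · exact le_refl _
  have hexp : ∀ y : ℝ, exponentialPDF ((n : ℝ) + 1) y
      = ENNReal.ofReal (if 0 ≤ y then ((n:ℝ)+1) * exp (-(((n:ℝ)+1) * y)) else 0) :=
    fun y => exponentialPDF_eq _ _
  set φ : ℝ → ℝ := fun x => (if 0 ≤ x then (n : ℝ) * exp (-(n : ℝ) * x) * (exp x - 1) ^ (n - 1) else 0)
      * (if 0 ≤ z - x then ((n:ℝ)+1) * exp (-(((n:ℝ)+1) * (z - x))) else 0) with hφ
  have hstep : (∫⁻ x, ENNReal.ofReal (if 0 ≤ x then (n : ℝ) * exp (-(n : ℝ) * x) * (exp x - 1) ^ (n - 1) else 0)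
        * exponentialPDF ((n : ℝ) + 1) (z - x)) = ∫⁻ x, ENNReal.ofReal (φ x) := by
    congr 1; funext x
    rw [hexp (z - x), ← ENNReal.ofReal_mul (hfnonneg x)]
  rw [hstep]
  rcases lt_or_ge z 0 with hz | hz
  · have hφ0 : ∀ x, φ x = 0 := by
      intro x
      rcases le_or_gt 0 x with hx | hx
      · have hne : ¬ (0 ≤ z - x) := by linarith
        simp only [hφ, if_neg hne, mul_zero]
      · simp only [hφ, if_neg (not_le.mpr hx), zero_mul]
    simp only [hφ0, ENNReal.ofReal_zero, lintegral_zero]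
    rw [if_neg (not_le.mpr hz)]
    simp
  · set ψ : ℝ → ℝ := fun x => ((n : ℝ) * exp (-(n : ℝ) * x) * (exp x - 1) ^ (n - 1))
        * (((n:ℝ)+1) * exp (-(((n:ℝ)+1) * (z - x)))) with hψ
    have hφind : φ = Set.indicator (Set.Icc 0 z) ψ := by
      funext x
      by_cases hx : x ∈ Set.Icc 0 z
      · rw [Set.indicator_of_mem hx]
        obtain ⟨h1, h2⟩ := hx
        simp only [hφ, hψ, if_pos h1, if_pos (by linarith : (0:ℝ) ≤ z - x)]
      · rw [Set.indicator_of_notMem hx]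
        rw [Set.mem_Icc, not_and_or] at hx
        rcases hx with h | h
        · simp only [hφ, if_neg h, zero_mul]
        · simp only [hφ, if_neg (not_le.mpr (by linarith [not_le.mp h] : z - x < 0)), mul_zero]
    have hψcont : Continuous ψ := by fun_prop
    have hφint : Integrable φ := by
      rw [hφind]
      exact (hψcont.integrableOn_Icc).integrable_indicator measurableSet_Icc
    rw [← ofReal_integral_eq_lintegral_ofReal hφint
      (Filter.Eventually.of_forall fun x => by
        rw [hφ]
        exact mul_nonneg (hfnonneg x) (by positivity))]
    rw [if_pos hz]
    congr 1
    rw [hφind, integral_indicator measurableSet_Icc, integral_Icc_eq_integral_Ioc,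
      ← intervalIntegral.integral_of_le hz]
    have hderiv : ∀ x ∈ Set.uIcc (0:ℝ) z,
        HasDerivAt (fun x => ((n:ℝ)+1) * exp (-(((n:ℝ)+1)) * z) * (exp x - 1) ^ n) (ψ x) x := by
      intro x _
      have h1 : HasDerivAt (fun x : ℝ => (exp x - 1) ^ n)
          ((n:ℝ) * (exp x - 1) ^ (n - 1) * exp x) x :=
        ((Real.hasDerivAt_exp x).sub_const 1).pow n
      have h2 := h1.const_mul (((n:ℝ)+1) * exp (-(((n:ℝ)+1)) * z))
      have hexpeq : exp (-(n:ℝ)*x) * exp (-(((n:ℝ)+1) * (z-x))) = exp (-((n:ℝ)+1)*z) * exp x := by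
        rw [← exp_add, ← exp_add]; congr 1; ring
      have h3 : ψ x = ((n:ℝ)+1) * exp (-(((n:ℝ)+1)) * z) * ((n:ℝ) * (exp x - 1) ^ (n - 1) * exp x) := by
        simp only [hψ]
        rw [show (n:ℝ) * exp (-(n:ℝ)*x) * (exp x - 1)^(n-1) * (((n:ℝ)+1) * exp (-(((n:ℝ)+1)*(z-x))))
            = ((n:ℝ) * (exp x - 1)^(n-1) * (((n:ℝ)+1))) * (exp (-(n:ℝ)*x) * exp (-(((n:ℝ)+1)*(z-x)))) from by ring,
          hexpeq]
        ring
      rw [h3]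
      exact h2
    rw [intervalIntegral.integral_eq_sub_of_hasDerivAt hderiv (hψcont.intervalIntegrable 0 z)]
    simp only [exp_zero, sub_self]
    rw [zero_pow (by omega : n ≠ 0)]
    ring

lemma density_measurable (n : ℕ) :
    Measurable (fun x : ℝ => ENNReal.ofReal (if 0 ≤ x then
      (n : ℝ) * exp (-(n : ℝ) * x) * (exp x - 1) ^ (n - 1) else 0)) := by
  apply ENNReal.measurable_ofReal.comp
  exact Measurable.ite measurableSet_Ici (by fun_prop) measurable_const

lemma measurable_exponentialPDF' (r : ℝ) : Measurable (exponentialPDF r) :=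
  ENNReal.measurable_ofReal.comp (measurable_exponentialPDFReal r)

lemma expMeasure_eq_withDensity (r : ℝ) :
    expMeasure r = volume.withDensity (exponentialPDF r) := rfl

/-- If `S_n = T_1 + ... + T_n` is a sum of independent random variables with
`T_j ~ Exp(j)`, then the law of `S_n` has density `n e^{-nx} (e^x - 1)^{n-1}`
on `[0, ∞)` with respect to Lebesgue measure. -/
theorem density_sum_exponential (n : ℕ) (hn : 1 ≤ n)
    {Ω : Type*} [MeasurableSpace Ω] (P : Measure Ω) [IsProbabilityMeasure P]
    (T : Fin n → Ω → ℝ) (hmeas : ∀ j, Measurable (T j))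
    (hindep : iIndepFun T P)
    (hlaw : ∀ j : Fin n, Measure.map (T j) P = expMeasure ((j : ℕ) + 1)) :
    Measure.map (fun ω => ∑ j, T j ω) P
      = volume.withDensity (fun x =>
          ENNReal.ofReal (if 0 ≤ x then
            (n : ℝ) * exp (-(n : ℝ) * x) * (exp x - 1) ^ (n - 1) else 0)) := by
  induction n, hn using Nat.le_induction with
  | base =>
    have h0 : (fun ω => ∑ j : Fin 1, T j ω) = T 0 := by
      funext ω; rw [Fin.sum_univ_one]
    rw [h0, hlaw 0]
    have : ((0 : Fin 1) : ℕ) = 0 := rfl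
    rw [this]
    norm_num
    rw [expMeasure_eq_withDensity]
    congr 1
    funext x
    rw [exponentialPDF_eq]
    norm_num
  | succ n hn IH =>
    classical
    set X : Ω → ℝ := fun ω => ∑ j : Fin n, T (Fin.castSucc j) ω with hX
    set Y : Ω → ℝ := T (Fin.last n) with hY
    have hXmeas : Measurable X := by
      apply Finset.measurable_sum
      intro j _
      exact hmeas _
    have hYmeas : Measurable Y := hmeas _
    -- independence of X and Y
    have hnotmem : Fin.last n ∉ Finset.univ.map Fin.castSuccEmb := by
      simp only [Finset.mem_map, Finset.mem_univ, true_and]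
      rintro ⟨j, hj⟩
      exact absurd hj (Fin.castSucc_lt_last j).ne
    have hXY : IndepFun X Y P := by
      have h := hindep.indepFun_finsetSum_of_notMem hmeas hnotmem
      have heq : (∑ j ∈ Finset.univ.map Fin.castSuccEmb, T j) = X := by
        funext ω
        rw [Finset.sum_apply, Finset.sum_map]
        rfl
      rwa [heq] at h
    -- the law of X by induction hypothesis
    have hlawX : Measure.map X P = volume.withDensity (fun x =>
        ENNReal.ofReal (if 0 ≤ x then
          (n : ℝ) * exp (-(n : ℝ) * x) * (exp x - 1) ^ (n - 1) else 0)) := by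
      apply IH (fun j => T (Fin.castSucc j)) (fun j => hmeas _)
      · exact iIndepFun_precomp hindep Fin.castSuccEmb
      · intro j
        have := hlaw (Fin.castSucc j)
        rwa [Fin.coe_castSucc] at this
    -- the law of Y
    have hlawY : Measure.map Y P = volume.withDensity (exponentialPDF ((n : ℝ) + 1)) := by
      rw [hY, hlaw (Fin.last n), Fin.val_last, expMeasure_eq_withDensity]
    -- rewrite the sum
    have hsum : (fun ω => ∑ j : Fin (n + 1), T j ω) = fun ω => X ω + Y ω := by
      funext ω
      rw [Fin.sum_univ_castSucc]
    rw [hsum]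
    have hpair : Measure.map (fun ω => (X ω, Y ω)) P = (Measure.map X P).prod (Measure.map Y P) :=
      (indepFun_iff_map_prod_eq_prod_map_map hXmeas.aemeasurable hYmeas.aemeasurable).mp hXY
    have hcomp : Measure.map (fun ω => X ω + Y ω) P
        = Measure.map (fun p : ℝ × ℝ => p.1 + p.2) (Measure.map (fun ω => (X ω, Y ω)) P) := by
      rw [Measure.map_map (by fun_prop) (hXmeas.prodMk hYmeas)]
      rfl
    rw [hcomp, hpair, hlawX, hlawY,
      map_add_withDensity _ _ (density_measurable n) (measurable_exponentialPDF' _)]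
    congr 1
    funext z
    rw [conv_density n hn z]
    push_cast
    rfl
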